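/- Over F_2, for i ≥ 0 and a vector space W, the Koszul-type complex ⋯ → Λ^j(W) ⊗ S^•(W) → Λ^{j-1}(W) ⊗ S^{•+2^i}(W) → ⋯ → S^{•+j·2^i}(W) → 0, with differential τ_i induced by Λ^j → Λ^{j-1}⊗Λ^1 followed by the (2^i)-th power map Λ^1 = W → S^{2^i}(W) and multiplication, has homology S*(W)/⟨x^{2^i} : x ∈ W⟩ concentrated in homological degree zero. -/

import Mathlib

open MvPolynomial

set_option linter.unusedSectionVars false
set_option maxHeartbeats 1000000

/-- The Koszul differential `τ_i` on the model `Λ^•(W) ⊗ S^•(W)`, where `Λ^•(W) ⊗ S^•(W)`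
is modelled as finitely supported functions from finite subsets of a basis of `W` (exterior
monomials) to polynomials: `τ_i (e_T ⊗ p) = Σ_{s ∈ T} e_{T∖s} ⊗ x_s^(2^i)·p`, i.e. the
composite of the exterior coproduct `Λ^j → Λ^(j-1) ⊗ Λ^1`, the `2^i`-th power map
`Λ^1 = W → S^(2^i)(W)` and multiplication. -/
noncomputable def koszulD (σ : Type) [DecidableEq σ] (i : ℕ) :
    (Finset σ →₀ MvPolynomial σ (ZMod 2)) →ₗ[ZMod 2]
      (Finset σ →₀ MvPolynomial σ (ZMod 2)) :=
  Finsupp.lsum (ZMod 2) (fun T => ∑ s ∈ T,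
    (Finsupp.lsingle (T.erase s)).comp (LinearMap.mulLeft (ZMod 2) (X s ^ 2 ^ i)))

namespace Stmt11Aux

variable {σ : Type} [DecidableEq σ]

lemma char2_add_self {A : Type*} [AddCommMonoid A] [Module (ZMod 2) A] (a : A) : a + a = 0 := by
  have h := two_smul (ZMod 2) a
  rw [show ((2 : ZMod 2)) = 0 by decide, zero_smul] at h
  exact h.symm

lemma koszulD_single (i : ℕ) (T : Finset σ) (p : MvPolynomial σ (ZMod 2)) :
    koszulD σ i (Finsupp.single T p) =
      ∑ s ∈ T, Finsupp.single (T.erase s) (X s ^ 2 ^ i * p) := by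
  rw [koszulD, Finsupp.lsum_single, LinearMap.sum_apply]
  simp [LinearMap.mulLeft_apply]

lemma X_pow_mul_monomial (s : σ) (q : ℕ) (μ : σ →₀ ℕ) :
    (X s ^ q : MvPolynomial σ (ZMod 2)) * monomial μ 1 =
      monomial (Finsupp.single s q + μ) 1 := by
  rw [X_pow_eq_monomial, monomial_mul, one_mul]

lemma koszulD_single_monomial (i : ℕ) (T : Finset σ) (μ : σ →₀ ℕ) :
    koszulD σ i (Finsupp.single T (monomial μ 1)) =
      ∑ s ∈ T, Finsupp.single (T.erase s) (monomial (Finsupp.single s (2 ^ i) + μ) 1) := by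
  rw [koszulD_single]
  exact Finset.sum_congr rfl fun s _ => by rw [X_pow_mul_monomial]

lemma koszulD_sq (i : ℕ) (m : Finset σ →₀ MvPolynomial σ (ZMod 2)) :
    koszulD σ i (koszulD σ i m) = 0 := by
  induction m using Finsupp.induction_linear with
  | zero => simp
  | add f g hf hg => rw [map_add, map_add, hf, hg, add_zero]
  | single T p =>
    rw [koszulD_single, map_sum]
    rw [Finset.sum_congr rfl (fun s _ => koszulD_single i (T.erase s) (X s ^ 2 ^ i * p))]
    rw [Finset.sum_sigma']
    refine Finset.sum_involution (fun x _ => ⟨x.2, x.1⟩) ?_ ?_ ?_ ?_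
    · rintro ⟨a, b⟩ ha
      simp only [Finset.mem_sigma, Finset.mem_erase] at ha
      have : (T.erase a).erase b = (T.erase b).erase a := Finset.erase_right_comm
      rw [this, show (X b ^ 2 ^ i * (X a ^ 2 ^ i * p)) = (X a ^ 2 ^ i * (X b ^ 2 ^ i * p)) by ring]
      exact char2_add_self _
    · rintro ⟨a, b⟩ ha _
      simp only [Finset.mem_sigma, Finset.mem_erase] at ha
      intro hc
      exact ha.2.1 (congrArg Sigma.fst hc)
    · rintro ⟨a, b⟩ ha
      simp only [Finset.mem_sigma, Finset.mem_erase] at ha ⊢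
      exact ⟨ha.2.2, ha.2.1.symm, ha.1⟩
    · rintro ⟨a, b⟩ _
      rfl

section Order

variable [LinearOrder σ]

def Bset (q : ℕ) (T : Finset σ) (μ : σ →₀ ℕ) : Finset σ :=
  T ∪ μ.support.filter (fun s => q ≤ μ s)

lemma Bset_erase_add (q : ℕ) (hq : 0 < q) (T : Finset σ) (μ : σ →₀ ℕ) {s : σ} (hs : s ∈ T) :
    Bset q (T.erase s) (Finsupp.single s q + μ) = Bset q T μ := by
  ext t
  by_cases h : t = s
  · subst h
    have hv : (Finsupp.single t q + μ) t = q + μ t := by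
      rw [Finsupp.add_apply, Finsupp.single_eq_same]
    constructor
    · intro _
      exact Finset.mem_union_left _ hs
    · intro _
      refine Finset.mem_union_right _ (Finset.mem_filter.mpr
        ⟨Finsupp.mem_support_iff.mpr ?_, ?_⟩) <;> rw [hv] <;> omega
  · have hv : (Finsupp.single s q + μ) t = μ t := by
      rw [Finsupp.add_apply, Finsupp.single_apply, if_neg (fun hh => h hh.symm), zero_add]
    simp only [Bset, Finset.mem_union, Finset.mem_filter, Finsupp.mem_support_iff,
      Finset.mem_erase, hv]
    constructor
    · rintro (⟨_, ht⟩ | h2)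
      · exact Or.inl ht
      · exact Or.inr h2
    · rintro (ht | h2)
      · exact Or.inl ⟨h, ht⟩
      · exact Or.inr h2

lemma exp_cancel (s : σ) (q : ℕ) (μ : σ →₀ ℕ) :
    (Finsupp.single s q + μ) - Finsupp.single s q = μ := add_tsub_cancel_left _ _

lemma exp_add_sub (μ : σ →₀ ℕ) {s s₀ : σ} (hne : s ≠ s₀) {q : ℕ} (h : q ≤ μ s₀) :
    (Finsupp.single s q + μ) - Finsupp.single s₀ q =
      Finsupp.single s q + (μ - Finsupp.single s₀ q) := by
  ext t
  simp only [Finsupp.tsub_apply, Finsupp.add_apply, Finsupp.single_apply]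
  rcases eq_or_ne s t with h1 | h1 <;> rcases eq_or_ne s₀ t with h2 | h2
  · exact absurd (h1.trans h2.symm) hne
  · subst h1; rw [if_pos rfl, if_neg h2]; omega
  · subst h2; rw [if_neg h1, if_pos rfl]; omega
  · rw [if_neg h1, if_neg h2]; omega

lemma exp_restore (μ : σ →₀ ℕ) {s₀ : σ} {q : ℕ} (h : q ≤ μ s₀) :
    Finsupp.single s₀ q + (μ - Finsupp.single s₀ q) = μ := by
  ext t
  rcases eq_or_ne s₀ t with h2 | h2
  · subst h2; rw [Finsupp.add_apply, Finsupp.tsub_apply, Finsupp.single_eq_same]; omega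
  · rw [Finsupp.add_apply, Finsupp.tsub_apply, Finsupp.single_apply, if_neg h2]; omega

noncomputable def homAux (q : ℕ) (T : Finset σ) (μ : σ →₀ ℕ) :
    Finset σ →₀ MvPolynomial σ (ZMod 2) :=
  if h : (Bset q T μ).Nonempty then
    if (Bset q T μ).min' h ∈ T then 0
    else Finsupp.single (insert ((Bset q T μ).min' h) T)
      (monomial (μ - Finsupp.single ((Bset q T μ).min' h) q) 1)
  else 0

noncomputable def homMap (σ : Type) [DecidableEq σ] [LinearOrder σ] (q : ℕ) :
    (Finset σ →₀ MvPolynomial σ (ZMod 2)) →ₗ[ZMod 2]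
      (Finset σ →₀ MvPolynomial σ (ZMod 2)) :=
  Finsupp.lsum (ZMod 2) fun T =>
    (basisMonomials σ (ZMod 2)).constr (ZMod 2) (fun μ => homAux q T μ)

lemma homMap_single_monomial (q : ℕ) (T : Finset σ) (μ : σ →₀ ℕ) :
    homMap σ q (Finsupp.single T (monomial μ 1)) = homAux q T μ := by
  rw [homMap, Finsupp.lsum_single]
  have h : (monomial μ (1 : ZMod 2)) = (basisMonomials σ (ZMod 2)) μ := by
    rw [coe_basisMonomials]
  rw [h, Module.Basis.constr_basis]

noncomputable def projMap (σ : Type) [DecidableEq σ] (q : ℕ) :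
    (Finset σ →₀ MvPolynomial σ (ZMod 2)) →ₗ[ZMod 2]
      (Finset σ →₀ MvPolynomial σ (ZMod 2)) :=
  (Finsupp.lsingle ∅).comp
    (((basisMonomials σ (ZMod 2)).constr (ZMod 2)
      (fun μ : σ →₀ ℕ => if ∀ s ∈ μ.support, μ s < q then (monomial μ 1 : MvPolynomial σ (ZMod 2)) else 0)).comp
      (Finsupp.lapply ∅))

lemma projMap_single_monomial (q : ℕ) (T : Finset σ) (μ : σ →₀ ℕ) :
    projMap σ q (Finsupp.single T (monomial μ 1)) =
      if T = ∅ then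
        (if ∀ s ∈ μ.support, μ s < q then Finsupp.single ∅ (monomial μ 1) else 0)
      else 0 := by
  have h : (monomial μ (1 : ZMod 2)) = (basisMonomials σ (ZMod 2)) μ := by
    rw [coe_basisMonomials]
  rw [projMap]
  simp only [LinearMap.comp_apply, Finsupp.lapply_apply, Finsupp.single_apply]
  by_cases hT : T = ∅
  · simp only [if_pos hT.symm, if_pos hT, h, Module.Basis.constr_basis]
    split_ifs <;> simp [Finsupp.lsingle_apply]
  · simp [if_neg hT]

lemma key (i : ℕ) (m : Finset σ →₀ MvPolynomial σ (ZMod 2)) :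
    koszulD σ i (homMap σ (2 ^ i) m) + homMap σ (2 ^ i) (koszulD σ i m)
      + projMap σ (2 ^ i) m = m := by
  have hq : 0 < 2 ^ i := pow_pos (by norm_num) i
  suffices h : (koszulD σ i) ∘ₗ (homMap σ (2 ^ i)) + (homMap σ (2 ^ i)) ∘ₗ (koszulD σ i)
      + projMap σ (2 ^ i) = LinearMap.id by
    have := LinearMap.ext_iff.mp h m
    simpa using this
  apply Finsupp.lhom_ext'
  intro T
  apply Module.Basis.ext (basisMonomials σ (ZMod 2))
  intro μ
  simp only [LinearMap.comp_apply, LinearMap.add_apply, LinearMap.id_apply,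
    coe_basisMonomials, Finsupp.lsingle_apply]
  by_cases hB : (Bset (2 ^ i) T μ).Nonempty
  · set s₀ := (Bset (2 ^ i) T μ).min' hB with hs₀def
    have hs₀B : s₀ ∈ Bset (2 ^ i) T μ := Finset.min'_mem _ hB
    by_cases hsT : s₀ ∈ T
    · -- min in T: only the H∘d term survives and equals the identity
      have hT0 : homMap σ (2 ^ i) (Finsupp.single T (monomial μ 1)) = 0 := by
        rw [homMap_single_monomial, homAux, dif_pos hB, if_pos hsT]
      have hproj : projMap σ (2 ^ i) (Finsupp.single T (monomial μ 1)) = 0 := by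
        rw [projMap_single_monomial,
          if_neg (by rintro rfl; exact absurd hsT (Finset.notMem_empty _))]
      rw [hT0, map_zero, zero_add, hproj, add_zero, koszulD_single_monomial, map_sum]
      rw [Finset.sum_congr rfl (fun s _ => homMap_single_monomial (2 ^ i) (T.erase s) _)]
      have h0 : ∀ s ∈ T, s ≠ s₀ → homAux (2 ^ i) (T.erase s) (Finsupp.single s (2 ^ i) + μ) = 0 := by
        intro s hs hne
        rw [homAux]
        have hBs := Bset_erase_add (2 ^ i) hq T μ hs
        simp only [hBs]
        rw [dif_pos hB, if_pos (Finset.mem_erase.mpr ⟨Ne.symm hne, hsT⟩)]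
      rw [Finset.sum_eq_single_of_mem s₀ hsT h0, homAux]
      have hBs := Bset_erase_add (2 ^ i) hq T μ hsT
      simp only [hBs]
      rw [dif_pos hB, if_neg (Finset.notMem_erase s₀ T), Finset.insert_erase hsT, exp_cancel]
    · -- min not in T
      have hμs₀ : 2 ^ i ≤ μ s₀ := by
        rcases Finset.mem_union.mp hs₀B with h | h
        · exact absurd h hsT
        · exact (Finset.mem_filter.mp h).2
      have hproj : projMap σ (2 ^ i) (Finsupp.single T (monomial μ 1)) = 0 := by
        rw [projMap_single_monomial]
        split_ifs with h1 h2
        · exfalso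
          have := h2 s₀ (Finsupp.mem_support_iff.mpr (by omega))
          omega
        · rfl
        · rfl
      have hH : homMap σ (2 ^ i) (Finsupp.single T (monomial μ 1)) =
          Finsupp.single (insert s₀ T) (monomial (μ - Finsupp.single s₀ (2 ^ i)) 1) := by
        rw [homMap_single_monomial, homAux, dif_pos hB, if_neg hsT]
      rw [hproj, add_zero, hH, koszulD_single_monomial, koszulD_single_monomial,
        Finset.sum_insert hsT, Finset.erase_insert hsT, exp_restore μ hμs₀, map_sum]
      have hHd : ∀ s ∈ T, homMap σ (2 ^ i)
          (Finsupp.single (T.erase s) (monomial (Finsupp.single s (2 ^ i) + μ) 1)) =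
          Finsupp.single ((insert s₀ T).erase s)
            (monomial (Finsupp.single s (2 ^ i) + (μ - Finsupp.single s₀ (2 ^ i))) 1) := by
        intro s hs
        have hsne : s ≠ s₀ := fun hh => hsT (hh ▸ hs)
        rw [homMap_single_monomial, homAux]
        have hBs := Bset_erase_add (2 ^ i) hq T μ hs
        simp only [hBs]
        rw [dif_pos hB, if_neg (fun hc => hsT (Finset.mem_of_mem_erase hc))]
        rw [exp_add_sub μ hsne hμs₀, Finset.erase_insert_of_ne (Ne.symm hsne)]
      rw [Finset.sum_congr rfl hHd, add_assoc, char2_add_self, add_zero]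
  · have hBe : Bset (2 ^ i) T μ = ∅ := Finset.not_nonempty_iff_eq_empty.mp hB
    rw [Bset, Finset.union_eq_empty] at hBe
    obtain ⟨hT, hfil⟩ := hBe
    subst hT
    have hH0 : homMap σ (2 ^ i) (Finsupp.single (∅ : Finset σ) (monomial μ 1)) = 0 := by
      rw [homMap_single_monomial, homAux, dif_neg hB]
    have hcond : ∀ s ∈ μ.support, μ s < 2 ^ i := by
      intro s hsupp
      have := Finset.filter_eq_empty_iff.mp hfil hsupp
      omega
    rw [hH0, map_zero, zero_add, koszulD_single_monomial, Finset.sum_empty, map_zero, zero_add,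
      projMap_single_monomial, if_pos rfl, if_pos hcond]


lemma homAux_mem (q : ℕ) (T : Finset σ) (μ : σ →₀ ℕ) :
    homAux q T μ ∈ Finsupp.supported (MvPolynomial σ (ZMod 2)) (ZMod 2)
      {S : Finset σ | S.card = T.card + 1} := by
  rw [homAux]
  split_ifs with h1 h2
  · exact Submodule.zero_mem _
  · rw [Finsupp.mem_supported]
    intro S hS
    have h3 := Finsupp.support_single_subset hS
    rw [Finset.mem_singleton] at h3
    subst h3
    exact Finset.card_insert_of_notMem h2
  · exact Submodule.zero_mem _

lemma homMap_single_mem (q : ℕ) (T : Finset σ) (p : MvPolynomial σ (ZMod 2)) :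
    homMap σ q (Finsupp.single T p) ∈ Finsupp.supported (MvPolynomial σ (ZMod 2)) (ZMod 2)
      {S : Finset σ | S.card = T.card + 1} := by
  have hp : p ∈ Submodule.span (ZMod 2) (Set.range (basisMonomials σ (ZMod 2))) := by
    rw [Module.Basis.span_eq]; trivial
  induction hp using Submodule.span_induction with
  | mem x hx =>
    obtain ⟨μ, rfl⟩ := hx
    rw [homMap, Finsupp.lsum_single, Module.Basis.constr_basis]
    exact homAux_mem q T μ
  | zero => rw [Finsupp.single_zero, map_zero]; exact Submodule.zero_mem _
  | add x y _ _ hx hy => rw [Finsupp.single_add, map_add]; exact Submodule.add_mem _ hx hy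
  | smul c x _ hx =>
    rw [← Finsupp.smul_single, map_smul]
    exact Submodule.smul_mem _ c hx

lemma homMap_mem (q : ℕ) (k : ℕ) (m : Finset σ →₀ MvPolynomial σ (ZMod 2))
    (hm : ∀ T ∈ m.support, T.card = k) :
    ∀ S ∈ (homMap σ q m).support, S.card = k + 1 := by
  have hmem : homMap σ q m ∈ Finsupp.supported (MvPolynomial σ (ZMod 2)) (ZMod 2)
      {S : Finset σ | S.card = k + 1} := by
    rw [← Finsupp.sum_single m, Finsupp.sum, map_sum]
    apply Submodule.sum_mem
    intro T hT
    have hk := hm T hT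
    have h2 := homMap_single_mem q T (m T)
    rw [hk] at h2
    exact h2
  intro S hS
  exact (Finsupp.mem_supported _ _).mp hmem hS

end Order

lemma mem_ideal_of_koszulD (i : ℕ) (m : Finset σ →₀ MvPolynomial σ (ZMod 2)) :
    (koszulD σ i m) ∅ ∈ Ideal.span {g : MvPolynomial σ (ZMod 2) |
        ∃ f : MvPolynomial σ (ZMod 2), f.IsHomogeneous 1 ∧ g = f ^ 2 ^ i} := by
  induction m using Finsupp.induction_linear with
  | zero => rw [map_zero]; simp only [Finsupp.coe_zero, Pi.zero_apply]; exact Ideal.zero_mem _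
  | add f g hf hg => rw [map_add, Finsupp.add_apply]; exact Ideal.add_mem _ hf hg
  | single T p =>
    rw [koszulD_single, Finsupp.finset_sum_apply]
    apply Ideal.sum_mem
    intro s _
    rw [Finsupp.single_apply]
    split_ifs
    · exact Ideal.mul_mem_right p _ (Ideal.subset_span ⟨X s, isHomogeneous_X _ _, rfl⟩)
    · exact Ideal.zero_mem _

lemma single_of_degree_one (d : σ →₀ ℕ)
    (h : (∑ s ∈ d.support, d s) = 1) : ∃ s, d = Finsupp.single s 1 := by
  have hne : d.support.Nonempty := by
    by_contra hc
    rw [Finset.not_nonempty_iff_eq_empty] at hc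
    rw [hc, Finset.sum_empty] at h
    omega
  obtain ⟨s, hs⟩ := hne
  refine ⟨s, ?_⟩
  have hd : 1 ≤ d s := Nat.one_le_iff_ne_zero.mpr (Finsupp.mem_support_iff.mp hs)
  have hsum := Finset.add_sum_erase _ d hs
  have hz : ∑ t ∈ d.support.erase s, d t = 0 ∧ d s = 1 := by
    constructor <;> omega
  ext t
  rcases eq_or_ne s t with rfl | hne2
  · rw [Finsupp.single_eq_same]; exact hz.2
  · rw [Finsupp.single_apply, if_neg hne2]
    by_contra hc
    have ht : t ∈ d.support.erase s :=
      Finset.mem_erase.mpr ⟨Ne.symm hne2, Finsupp.mem_support_iff.mpr hc⟩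
    exact hc (Finset.sum_eq_zero_iff.mp hz.1 t ht)

end Stmt11Aux

/-- Over `𝔽₂`, the Koszul-type complex `⋯ → Λ^j(W) ⊗ S^•(W) → Λ^(j-1)(W) ⊗ S^(•+2^i)(W) → ⋯`
with differential `τ_i` has homology `S^*(W)/⟨x^(2^i) : x ∈ W⟩` concentrated in homological
degree zero: `τ_i² = 0`, the complex is exact in exterior degrees `j > 0`, and in degree `0`
the image is the ideal generated by the `2^i`-th powers of linear forms. -/
theorem stmt11 (σ : Type) [Fintype σ] [DecidableEq σ] (i : ℕ) :
    (∀ m, koszulD σ i (koszulD σ i m) = 0) ∧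
    (∀ (j : ℕ), 0 < j → ∀ m : Finset σ →₀ MvPolynomial σ (ZMod 2),
      (∀ T ∈ m.support, T.card = j) → koszulD σ i m = 0 →
        ∃ m' : Finset σ →₀ MvPolynomial σ (ZMod 2),
          (∀ T ∈ m'.support, T.card = j + 1) ∧ koszulD σ i m' = m) ∧
    (∀ p : MvPolynomial σ (ZMod 2),
      (∃ m' : Finset σ →₀ MvPolynomial σ (ZMod 2),
        (∀ T ∈ m'.support, T.card = 1) ∧ koszulD σ i m' = Finsupp.single ∅ p) ↔
      p ∈ Ideal.span {g : MvPolynomial σ (ZMod 2) |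
        ∃ f : MvPolynomial σ (ZMod 2), f.IsHomogeneous 1 ∧ g = f ^ 2 ^ i}) := by
  refine ⟨Stmt11Aux.koszulD_sq i, ?_, ?_⟩
  · intro j hj m hm hdm
    letI : LinearOrder σ := LinearOrder.lift' (Fintype.equivFin σ) (Fintype.equivFin σ).injective
    refine ⟨Stmt11Aux.homMap σ (2 ^ i) m, Stmt11Aux.homMap_mem (2 ^ i) j m hm, ?_⟩
    have hk := Stmt11Aux.key i m
    rw [hdm, map_zero, add_zero] at hk
    have hm0 : m ∅ = 0 := by
      by_contra hc
      have hcard := hm ∅ (Finsupp.mem_support_iff.mpr hc)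
      rw [Finset.card_empty] at hcard
      omega
    have hproj : Stmt11Aux.projMap σ (2 ^ i) m = 0 := by
      rw [Stmt11Aux.projMap]
      simp [hm0]
    rw [hproj, add_zero] at hk
    exact hk
  · intro p
    constructor
    · rintro ⟨m', _, hd⟩
      have hmem := Stmt11Aux.mem_ideal_of_koszulD i m'
      rw [hd, Finsupp.single_eq_same] at hmem
      exact hmem
    · intro hp
      have hle : Ideal.span {g : MvPolynomial σ (ZMod 2) |
            ∃ f : MvPolynomial σ (ZMod 2), f.IsHomogeneous 1 ∧ g = f ^ 2 ^ i}
          ≤ Ideal.span (Set.range fun s : σ => (X s : MvPolynomial σ (ZMod 2)) ^ 2 ^ i) := by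
        rw [Ideal.span_le]
        rintro g ⟨f, hf, rfl⟩
        have hdec : f ^ 2 ^ i = ∑ d ∈ f.support, (monomial d (coeff d f)) ^ 2 ^ i := by
          conv_lhs => rw [← MvPolynomial.support_sum_monomial_coeff f]
          rw [sum_pow_char_pow]
        rw [SetLike.mem_coe, hdec]
        apply Ideal.sum_mem
        intro d hd
        have hdd : (∑ s ∈ d.support, d s) = 1 := by
          have hw := hf (mem_support_iff.mp hd)
          rw [show (1 : σ → ℕ) = fun _ => 1 from rfl, ← Finsupp.degree_eq_weight_one (R := ℕ)] at hw
          rw [← hw, Finsupp.degree]; rfl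
        obtain ⟨s, hds⟩ := Stmt11Aux.single_of_degree_one d hdd
        rw [hds, ← C_mul_X_eq_monomial, mul_pow]
        exact Ideal.mul_mem_left _ _ (Ideal.subset_span ⟨s, rfl⟩)
      have hp2 := hle hp
      rw [Ideal.span, Submodule.mem_span_range_iff_exists_fun] at hp2
      obtain ⟨c, hc⟩ := hp2
      refine ⟨∑ s : σ, Finsupp.single {s} (c s), ?_, ?_⟩
      · intro T hT
        have hmem : (∑ s : σ, Finsupp.single ({s} : Finset σ) (c s)) ∈
            Finsupp.supported (MvPolynomial σ (ZMod 2)) (ZMod 2) {S : Finset σ | S.card = 1} := by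
          apply Submodule.sum_mem
          intro s _
          rw [Finsupp.mem_supported]
          intro S hS
          have h3 := Finsupp.support_single_subset hS
          rw [Finset.mem_singleton] at h3
          subst h3
          exact Finset.card_singleton s
        exact (Finsupp.mem_supported _ _).mp hmem hT
      · rw [map_sum]
        rw [Finset.sum_congr rfl (fun s _ => Stmt11Aux.koszulD_single i {s} (c s))]
        simp only [Finset.sum_singleton, Finset.erase_singleton]
        have h4 := map_sum (Finsupp.lsingle (∅ : Finset σ) :
            MvPolynomial σ (ZMod 2) →ₗ[ZMod 2] (Finset σ →₀ MvPolynomial σ (ZMod 2)))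
          (fun x => (X x : MvPolynomial σ (ZMod 2)) ^ 2 ^ i * c x) Finset.univ
        simp only [Finsupp.lsingle_apply] at h4
        rw [← h4]
        congr 1
        rw [← hc]
        exact Finset.sum_congr rfl fun s _ => by rw [smul_eq_mul, mul_comm]
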